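/- arXiv:2304.01624 — 3 statements merged into one kernel-verified Lean document; each statement's English description precedes it below -/
import Mathlib

section
/- Let A ∈ ℂ^{n×n}, B ∈ ℂ^{n×m}, C ∈ ℂ^{p×n}, and let X ∈ ℂ^{n×n} be Hermitian with 𝓡(X) = R·Rᴴ for some R ∈ ℂ^{n×p}. Let s ∈ ℂ with Re(s) > 0 be such that Aᴴ − X B Bᴴ − s·I_n is invertible, and set Ẑ = (Aᴴ − X B Bᴴ − s·I_n)^{-1}·R and Y_{22} = (1/(2·Re(s)))·(I_p + Ẑᴴ B Bᴴ Ẑ). Then Y_{22} is positive definite (in particular invertible), and the updated approximation X' = X + Ẑ·Y_{22}^{-1}·Ẑᴴ satisfies 𝓡(X') = R'·R'ᴴ with R' = R + Ẑ·Y_{22}^{-1}. -/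
open Matrix
open scoped ComplexOrder

/-- A positive complex scalar multiple of a positive definite matrix is positive definite. -/
lemma posDef_smul_of_pos {p : ℕ} (c : ℂ) (hc : 0 < c) (M : Matrix (Fin p) (Fin p) ℂ)
    (hM : M.PosDef) : (c • M).PosDef := by
  refine Matrix.PosDef.of_dotProduct_mulVec_pos ?_ (fun x hx => ?_)
  · rw [Matrix.IsHermitian, conjTranspose_smul, hM.1.eq]
    congr 1
    rw [Complex.star_def, Complex.conj_eq_iff_im]
    exact (Complex.lt_def.mp hc).2.symm
  · rw [smul_mulVec, dotProduct_smul, smul_eq_mul]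
    exact mul_pos hc (hM.dotProduct_mulVec_pos hx)

/-- One step of the RADI-type iteration: if the Riccati residual of the
Hermitian `X` factors as `R·Rᴴ`, `Re(s) > 0`, `Zh = (Aᴴ − XBBᴴ − sI)⁻¹R` and
`Y₂₂ = (1/(2Re s))(I + ZhᴴBBᴴZh)`, then `Y₂₂` is positive definite and the
updated `X' = X + Zh Y₂₂⁻¹ Zhᴴ` has Riccati residual `R'·R'ᴴ` with
`R' = R + Zh Y₂₂⁻¹`. -/
theorem stmt15 (n m p : ℕ)
    (A : Matrix (Fin n) (Fin n) ℂ) (B : Matrix (Fin n) (Fin m) ℂ)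
    (C : Matrix (Fin p) (Fin n) ℂ)
    (X : Matrix (Fin n) (Fin n) ℂ) (hX : X.IsHermitian)
    (R : Matrix (Fin n) (Fin p) ℂ)
    (hres : Aᴴ * X + X * A + Cᴴ * C - X * B * Bᴴ * X = R * Rᴴ)
    (s : ℂ) (hs : 0 < s.re)
    (hunit : IsUnit (Aᴴ - X * B * Bᴴ - s • (1 : Matrix (Fin n) (Fin n) ℂ)))
    (Zh : Matrix (Fin n) (Fin p) ℂ)
    (hZh : Zh = (Aᴴ - X * B * Bᴴ - s • (1 : Matrix (Fin n) (Fin n) ℂ))⁻¹ * R)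
    (Y₂₂ : Matrix (Fin p) (Fin p) ℂ)
    (hY₂₂ : Y₂₂ = ((2 * s.re : ℂ))⁻¹ • ((1 : Matrix (Fin p) (Fin p) ℂ) + Zhᴴ * B * Bᴴ * Zh)) :
    Y₂₂.PosDef ∧
    Aᴴ * (X + Zh * Y₂₂⁻¹ * Zhᴴ) + (X + Zh * Y₂₂⁻¹ * Zhᴴ) * A + Cᴴ * C -
        (X + Zh * Y₂₂⁻¹ * Zhᴴ) * B * Bᴴ * (X + Zh * Y₂₂⁻¹ * Zhᴴ) =
      (R + Zh * Y₂₂⁻¹) * (R + Zh * Y₂₂⁻¹)ᴴ := by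
  have h2s : (2 * (s.re : ℂ)) ≠ 0 := by
    simp only [ne_eq, mul_eq_zero, OfNat.ofNat_ne_zero, false_or, Complex.ofReal_eq_zero]
    exact hs.ne'
  -- positive semidefiniteness of `Zhᴴ B Bᴴ Zh`
  have hN : (Zhᴴ * B * Bᴴ * Zh).PosSemidef := by
    have h := Matrix.posSemidef_conjTranspose_mul_self (Bᴴ * Zh)
    simpa [Matrix.conjTranspose_mul, Matrix.mul_assoc] using h
  have hc : (0 : ℂ) < ((2 * (s.re : ℂ)))⁻¹ := by
    have hcast : (((2 * s.re)⁻¹ : ℝ) : ℂ) = ((2 * (s.re : ℂ)))⁻¹ := by push_cast; ring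
    rw [← hcast, Complex.zero_lt_real]
    positivity
  have hPD : Y₂₂.PosDef := by
    rw [hY₂₂]
    exact posDef_smul_of_pos _ hc _ (Matrix.PosDef.add_posSemidef Matrix.PosDef.one hN)
  refine ⟨hPD, ?_⟩
  have hYdet : IsUnit Y₂₂.det := (Matrix.isUnit_iff_isUnit_det _).mp hPD.isUnit
  have hYY : Y₂₂ * Y₂₂⁻¹ = 1 := Matrix.mul_nonsing_inv _ hYdet
  have hYH : Y₂₂⁻¹ᴴ = Y₂₂⁻¹ := hPD.inv.isHermitian.eq
  -- the key identity `Aᴴ Zh = X B Bᴴ Zh + s Zh + R`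
  have hdet : IsUnit (Aᴴ - X * B * Bᴴ - s • (1 : Matrix (Fin n) (Fin n) ℂ)).det :=
    (Matrix.isUnit_iff_isUnit_det _).mp hunit
  have hMZ : (Aᴴ - X * B * Bᴴ - s • (1 : Matrix (Fin n) (Fin n) ℂ)) * Zh = R := by
    rw [hZh, ← Matrix.mul_assoc, Matrix.mul_nonsing_inv _ hdet, Matrix.one_mul]
  have hkey : Aᴴ * Zh = X * (B * (Bᴴ * Zh)) + s • Zh + R := by
    simp only [Matrix.sub_mul, Matrix.smul_mul, Matrix.one_mul, Matrix.mul_assoc] at hMZ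
    linear_combination (norm := module) hMZ
  have hkeyH : Zhᴴ * A = Zhᴴ * (B * (Bᴴ * X)) + (starRingEnd ℂ s) • Zhᴴ + Rᴴ := by
    have h := congrArg conjTranspose hkey
    simpa [Matrix.conjTranspose_mul, Matrix.conjTranspose_add, Matrix.conjTranspose_smul,
      hX.eq, Matrix.mul_assoc] using h
  have e1 : Aᴴ * (Zh * (Y₂₂⁻¹ * Zhᴴ)) =
      X * (B * (Bᴴ * (Zh * (Y₂₂⁻¹ * Zhᴴ)))) + s • (Zh * (Y₂₂⁻¹ * Zhᴴ)) +
        R * (Y₂₂⁻¹ * Zhᴴ) := by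
    have h := congrArg (· * (Y₂₂⁻¹ * Zhᴴ)) hkey
    simpa [Matrix.add_mul, Matrix.smul_mul, Matrix.mul_assoc] using h
  have e2 : Zh * (Y₂₂⁻¹ * (Zhᴴ * A)) =
      Zh * (Y₂₂⁻¹ * (Zhᴴ * (B * (Bᴴ * X)))) +
        (starRingEnd ℂ s) • (Zh * (Y₂₂⁻¹ * Zhᴴ)) + Zh * (Y₂₂⁻¹ * Rᴴ) := by
    have h := congrArg (fun W => Zh * (Y₂₂⁻¹ * W)) hkeyH
    simpa [Matrix.mul_add, Matrix.mul_smul, Matrix.mul_assoc] using h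
  have hadd : s + starRingEnd ℂ s = 2 * (s.re : ℂ) := by
    rw [Complex.add_conj]; push_cast; ring
  have hscale : (2 * (s.re : ℂ)) • Y₂₂ = 1 + Zhᴴ * B * Bᴴ * Zh := by
    rw [hY₂₂, smul_smul, mul_inv_cancel₀ h2s, one_smul]
  have hmagic : (s + starRingEnd ℂ s) • (Zh * (Y₂₂⁻¹ * Zhᴴ)) =
      Zh * (Y₂₂⁻¹ * (Y₂₂⁻¹ * Zhᴴ)) +
        Zh * (Y₂₂⁻¹ * (Zhᴴ * (B * (Bᴴ * (Zh * (Y₂₂⁻¹ * Zhᴴ)))))) := by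
    calc (s + starRingEnd ℂ s) • (Zh * (Y₂₂⁻¹ * Zhᴴ))
        = Zh * (Y₂₂⁻¹ * (((2 * (s.re : ℂ)) • Y₂₂) * (Y₂₂⁻¹ * Zhᴴ))) := by
          rw [hadd, Matrix.smul_mul, Matrix.mul_smul, Matrix.mul_smul,
            ← Matrix.mul_assoc Y₂₂ Y₂₂⁻¹ Zhᴴ, hYY, Matrix.one_mul]
      _ = Zh * (Y₂₂⁻¹ * ((1 + Zhᴴ * B * Bᴴ * Zh) * (Y₂₂⁻¹ * Zhᴴ))) := by rw [hscale]
      _ = Zh * (Y₂₂⁻¹ * (Y₂₂⁻¹ * Zhᴴ)) +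
            Zh * (Y₂₂⁻¹ * (Zhᴴ * (B * (Bᴴ * (Zh * (Y₂₂⁻¹ * Zhᴴ)))))) := by
          simp only [Matrix.add_mul, Matrix.mul_add, Matrix.one_mul, Matrix.mul_assoc]
  have hres' : Aᴴ * X + X * A + Cᴴ * C - X * (B * (Bᴴ * X)) = R * Rᴴ := by
    simpa [Matrix.mul_assoc] using hres
  simp only [Matrix.conjTranspose_add, Matrix.conjTranspose_mul, hYH, Matrix.add_mul,
    Matrix.mul_add, Matrix.mul_assoc]
  linear_combination (norm := module) hres' + e1 + e2 + hmagic
end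

section
/- Let A ∈ ℂ^{n×n}, C ∈ ℂ^{p×n}, and let X ∈ ℂ^{n×n} be Hermitian such that the Lyapunov residual satisfies Aᴴ X + X A + Cᴴ C = R·Rᴴ for some R ∈ ℂ^{n×p}. Let s ∈ ℂ be such that Aᴴ − s·I_n is invertible, and set Ẑ = (Aᴴ − s·I_n)^{-1}·R. Then the updated approximation X' = X + 2·Re(s)·Ẑ·Ẑᴴ satisfies Aᴴ X' + X' A + Cᴴ C = R'·R'ᴴ with R' = R + 2·Re(s)·Ẑ. -/
open Matrix

/-- One step of the low-rank ADI iteration for the Lyapunov equation: if the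
Lyapunov residual of the Hermitian `X` is `R·Rᴴ` and `Zh = (Aᴴ − sI)⁻¹R`, then
`X' = X + 2Re(s)·ZhZhᴴ` has Lyapunov residual `R'·R'ᴴ` with
`R' = R + 2Re(s)·Zh`. -/
theorem stmt16 (n p : ℕ)
    (A : Matrix (Fin n) (Fin n) ℂ) (C : Matrix (Fin p) (Fin n) ℂ)
    (X : Matrix (Fin n) (Fin n) ℂ) (hX : X.IsHermitian)
    (R : Matrix (Fin n) (Fin p) ℂ)
    (hres : Aᴴ * X + X * A + Cᴴ * C = R * Rᴴ)
    (s : ℂ)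
    (hunit : IsUnit (Aᴴ - s • (1 : Matrix (Fin n) (Fin n) ℂ)))
    (Zh : Matrix (Fin n) (Fin p) ℂ)
    (hZh : Zh = (Aᴴ - s • (1 : Matrix (Fin n) (Fin n) ℂ))⁻¹ * R) :
    Aᴴ * (X + (2 * s.re : ℂ) • (Zh * Zhᴴ)) + (X + (2 * s.re : ℂ) • (Zh * Zhᴴ)) * A +
        Cᴴ * C =
      (R + (2 * s.re : ℂ) • Zh) * (R + (2 * s.re : ℂ) • Zh)ᴴ := by
  have hdet : IsUnit (Aᴴ - s • (1 : Matrix (Fin n) (Fin n) ℂ)).det :=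
    (Matrix.isUnit_iff_isUnit_det _).mp hunit
  have hM : (Aᴴ - s • (1 : Matrix (Fin n) (Fin n) ℂ)) * Zh = R := by
    rw [hZh, ← Matrix.mul_assoc, Matrix.mul_nonsing_inv _ hdet, Matrix.one_mul]
  have hA : Aᴴ * Zh = R + s • Zh := by
    have h := hM
    rw [Matrix.sub_mul, Matrix.smul_mul, Matrix.one_mul] at h
    linear_combination (norm := (rw [sub_eq_iff_eq_add] at h; rw [h]; abel)) h
  have hA2 : Zhᴴ * A = Rᴴ + (starRingEnd ℂ s) • Zhᴴ := by
    have := congrArg conjTranspose hA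
    simpa [Matrix.conjTranspose_mul, Matrix.conjTranspose_smul] using this
  have hs : (2 * s.re : ℂ) = s + starRingEnd ℂ s := by
    rw [Complex.add_conj]; push_cast; ring
  have key : Aᴴ * (Zh * Zhᴴ) + (Zh * Zhᴴ) * A =
      R * Zhᴴ + Zh * Rᴴ + (s + starRingEnd ℂ s) • (Zh * Zhᴴ) := by
    rw [← Matrix.mul_assoc, hA, Matrix.mul_assoc, hA2, Matrix.add_mul, Matrix.mul_add,
      Matrix.smul_mul, Matrix.mul_smul, add_smul]
    abel
  calc Aᴴ * (X + (2 * s.re : ℂ) • (Zh * Zhᴴ)) + (X + (2 * s.re : ℂ) • (Zh * Zhᴴ)) * A +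
        Cᴴ * C
      = (Aᴴ * X + X * A + Cᴴ * C) +
        (2 * s.re : ℂ) • (Aᴴ * (Zh * Zhᴴ) + (Zh * Zhᴴ) * A) := by
        rw [Matrix.mul_add, Matrix.add_mul, Matrix.mul_smul, Matrix.smul_mul, smul_add]
        abel
    _ = R * Rᴴ + (2 * s.re : ℂ) •
        (R * Zhᴴ + Zh * Rᴴ + (2 * s.re : ℂ) • (Zh * Zhᴴ)) := by
        rw [hres, key, hs]
    _ = (R + (2 * s.re : ℂ) • Zh) * (R + (2 * s.re : ℂ) • Zh)ᴴ := by
        have h2 : star (2 * (s.re : ℂ)) = (2 * s.re : ℂ) := by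
          simp [Complex.ext_iff]
        rw [Matrix.conjTranspose_add, Matrix.conjTranspose_smul, h2, Matrix.add_mul,
          Matrix.mul_add, Matrix.mul_add, Matrix.smul_mul, Matrix.mul_smul, smul_add,
          smul_add, smul_smul]
        simp only [Matrix.smul_mul, Matrix.mul_smul, smul_smul]
        ring_nf
        abel
end

section
/- Let A ∈ ℝ^{n×n}, R ∈ ℝ^{n×p}, and let μ = a + i·b ∈ ℂ with a, b ∈ ℝ, b ≠ 0, be such that Aᵀ − μ·I_n is invertible (over ℂ). Set W = (Aᵀ − μ·I_n)^{-1}·R ∈ ℂ^{n×p} and let Re(W), Im(W) ∈ ℝ^{n×p} denote its entrywise real and imaginary parts. Then Aᵀ·Re(W) = R + a·Re(W) − b·Im(W) and Aᵀ·Im(W) = b·Re(W) + a·Im(W); equivalently, Aᵀ·[Re(W) Im(W)] = [R 0] + [Re(W) Im(W)]·[[a·I_p, b·I_p], [−b·I_p, a·I_p]], so the Krylov basis can be expanded by the real blocks Re(W) and Im(W) for the pair of complex conjugate shifts μ, μ̄. -/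
open Matrix

/-- Realification: for real `A`, `R` and a complex shift `μ = a + ib` with
`b ≠ 0`, the (complex) solve `W = (Aᵀ − μI)⁻¹R` yields real blocks `Re W`,
`Im W` that expand the Krylov basis:
`Aᵀ·[Re W  Im W] = [R  0] + [Re W  Im W]·[[aI, bI], [−bI, aI]]`. -/
theorem stmt18 (n p : ℕ)
    (A : Matrix (Fin n) (Fin n) ℝ) (R : Matrix (Fin n) (Fin p) ℝ)
    (a b : ℝ) (hb : b ≠ 0)
    (hunit : IsUnit ((A.map (Complex.ofReal))ᵀ -
      ((a : ℂ) + (b : ℂ) * Complex.I) • (1 : Matrix (Fin n) (Fin n) ℂ)))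
    (W : Matrix (Fin n) (Fin p) ℂ)
    (hW : W = ((A.map (Complex.ofReal))ᵀ -
      ((a : ℂ) + (b : ℂ) * Complex.I) • (1 : Matrix (Fin n) (Fin n) ℂ))⁻¹ *
        R.map (Complex.ofReal)) :
    Aᵀ * W.map Complex.re =
      R + a • W.map Complex.re - b • W.map Complex.im ∧
    Aᵀ * W.map Complex.im =
      b • W.map Complex.re + a • W.map Complex.im ∧
    Aᵀ * fromCols (W.map Complex.re) (W.map Complex.im) =
      fromCols R 0 +
        fromCols (W.map Complex.re) (W.map Complex.im) *
          fromBlocks (a • (1 : Matrix (Fin p) (Fin p) ℝ))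
            (b • (1 : Matrix (Fin p) (Fin p) ℝ))
            ((-b) • (1 : Matrix (Fin p) (Fin p) ℝ))
            (a • (1 : Matrix (Fin p) (Fin p) ℝ)) := by
  set M := ((A.map (Complex.ofReal))ᵀ -
      ((a : ℂ) + (b : ℂ) * Complex.I) • (1 : Matrix (Fin n) (Fin n) ℂ)) with hM
  have hMW : M * W = R.map Complex.ofReal := by
    rw [hW, ← Matrix.mul_assoc, Matrix.mul_nonsing_inv _ ((Matrix.isUnit_iff_isUnit_det M).mp hunit), Matrix.one_mul]
  have key : ∀ i j, ((A.map Complex.ofReal)ᵀ * W) i j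
      = (R.map Complex.ofReal) i j + ((a : ℂ) + (b : ℂ) * Complex.I) * W i j := by
    intro i j
    have h := congrFun (congrFun hMW i) j
    rw [hM] at h
    rw [Matrix.sub_mul, Matrix.smul_mul, Matrix.one_mul] at h
    have := sub_eq_iff_eq_add.mp h
    simpa [Matrix.smul_apply] using this
  have h1 : Aᵀ * W.map Complex.re = R + a • W.map Complex.re - b • W.map Complex.im := by
    ext i j
    have h := congrArg Complex.re (key i j)
    simp only [mul_apply, map_apply, transpose_apply, Complex.re_sum, Complex.add_re,
      Complex.mul_re, Complex.ofReal_re, Complex.ofReal_im, Complex.add_im, Complex.mul_im,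
      Complex.I_re, Complex.I_im] at h
    simp [mul_apply, Matrix.sub_apply, Matrix.add_apply, Matrix.smul_apply, mul_comm, mul_assoc, mul_left_comm]
    simp only [mul_zero, zero_mul, mul_one, sub_zero, add_zero, zero_add] at h
    linarith
  have h2 : Aᵀ * W.map Complex.im = b • W.map Complex.re + a • W.map Complex.im := by
    ext i j
    have h := congrArg Complex.im (key i j)
    simp only [mul_apply, map_apply, transpose_apply, Complex.im_sum, Complex.add_re,
      Complex.mul_re, Complex.ofReal_re, Complex.ofReal_im, Complex.add_im, Complex.mul_im,
      Complex.I_re, Complex.I_im] at h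
    simp [mul_apply, Matrix.sub_apply, Matrix.add_apply, Matrix.smul_apply, mul_comm, mul_assoc, mul_left_comm]
    simp only [mul_zero, zero_mul, mul_one, sub_zero, add_zero, zero_add] at h
    linarith
  refine ⟨h1, h2, ?_⟩
  rw [Matrix.mul_fromCols, Matrix.fromCols_mul_fromBlocks, h1, h2]
  ext i (j | j) <;>
    simp [fromCols, Matrix.mul_smul, Matrix.mul_one] <;> ring
end
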